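/- Iterated Laplacian of the phase-space Gaussian, multi-dimensional Laguerre formula: Let ε > 0, d ≥ 1 and N ∈ ℕ. Then for all z = (q,p) ∈ ℝ^{2d}, (−(ε/2) Δ)^N W_0(z) = N! · W_0(z) · Σ_{n=0}^{N} binom(N+d−1, n+d−1) Σ_{k ∈ ℕ^d, |k| = n} Π_{j=1}^d L_{k_j}(ρ_j(z)), where Δ is the Laplacian on ℝ^{2d} and ρ_j(q,p) = (2/ε)(q_j² + p_j²). -/

import Mathlib

open MeasureTheory Finset

noncomputable section

/-- Phase space `ℝ^d × ℝ^d`. -/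
abbrev PS (d : ℕ) := (Fin d → ℝ) × (Fin d → ℝ)

/-- The `n`-th Laguerre polynomial. -/
def laguerre (n : ℕ) (x : ℝ) : ℝ :=
  ∑ j ∈ Finset.range (n + 1), (n.choose (n - j) : ℝ) * (-x) ^ j / (Nat.factorial j)

/-- The Laplacian on phase space `ℝ^{2d}`. -/
def phaseLap {d : ℕ} {F : Type*} [NormedAddCommGroup F] [NormedSpace ℝ F]
    (f : PS d → F) : PS d → F := fun z =>
  (∑ i, iteratedDeriv 2 (fun t => f (Function.update z.1 i t, z.2)) (z.1 i)) +
  (∑ i, iteratedDeriv 2 (fun t => f (z.1, Function.update z.2 i t)) (z.2 i))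

/-- The phase-space Gaussian `W_0(z) = (πε)^{−d} e^{−|z|²/ε}`. -/
def gaussW0 {d : ℕ} (ε : ℝ) : PS d → ℝ := fun z =>
  (((Real.pi * ε) ^ d : ℝ))⁻¹ * Real.exp (-(∑ i, (z.1 i ^ 2 + z.2 i ^ 2)) / ε)

namespace IterLag

open Polynomial

lemma chooseR1 (n k : ℕ) : ((n.choose (k+1) : ℝ)) * (k+1) = (n.choose k : ℝ) * ((n:ℝ) - k) := by
  rcases le_or_gt k n with h | h
  · have hc : ((n.choose (k+1) * (k+1) : ℕ) : ℝ) = ((n.choose k * (n-k) : ℕ) : ℝ) := by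
      rw [Nat.choose_succ_right_eq n k]
    push_cast [Nat.cast_sub h] at hc
    linarith [hc]
  · rw [Nat.choose_eq_zero_of_lt h, Nat.choose_eq_zero_of_lt (by omega)]
    simp

lemma chooseR2 (n k : ℕ) : (n:ℝ) * ((n-1).choose k : ℝ) = (n.choose k : ℝ) * ((n:ℝ) - k) := by
  cases n with
  | zero =>
    simp only [Nat.cast_zero, zero_mul, Nat.zero_sub]
    rcases Nat.eq_zero_or_pos k with rfl | hk
    · simp
    · rw [Nat.choose_eq_zero_of_lt hk]; simp
  | succ m =>
    have h2 := chooseR1 (m+1) k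
    have hc : ((Nat.succ m * m.choose k : ℕ) : ℝ) = (((m+1).choose (k+1) * (k+1) : ℕ) : ℝ) := by
      simp only [Nat.succ_eq_add_one, Nat.add_one_mul_choose_eq m k]
    simp only [Nat.succ_sub_one]
    push_cast at hc ⊢
    rw [hc, h2]; push_cast; ring

lemma choosePascal (n k : ℕ) : (((n+1).choose (k+1) : ℝ)) = (n.choose k : ℝ) + (n.choose (k+1) : ℝ) := by
  rw [Nat.choose_succ_succ]; push_cast; ring


lemma keyid (n m : ℕ) : 4*((m:ℝ)+2)*((n.choose (m+2)):ℝ) + (4*(m:ℝ)+5-2*(n:ℝ))*((n.choose (m+1)):ℝ)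
    + ((m:ℝ)+1)*((n.choose m):ℝ)
    = ((n:ℝ)+1)*(((n+1).choose (m+1)):ℝ) + (n:ℝ)*(((n-1).choose (m+1)):ℝ) := by
  have h1 := chooseR1 n m
  have h2 := chooseR1 n (m+1)
  have h3 := choosePascal n m
  have h4 := chooseR2 n (m+1)
  push_cast at h1 h2 h3 h4
  linear_combination h1 + 4 * h2 - ((n:ℝ)+1) * h3 - h4

noncomputable def LagP (n : ℕ) : Polynomial ℝ :=
  ∑ j ∈ Finset.range (n+1), Polynomial.C ((-1)^j * (n.choose j : ℝ) / (Nat.factorial j)) * Polynomial.X ^ j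

lemma coeff_LagP (n k : ℕ) : (LagP n).coeff k = (-1)^k * (n.choose k : ℝ) / (Nat.factorial k) := by
  rw [LagP, finset_sum_coeff]
  simp only [coeff_C_mul, coeff_X_pow]
  rw [Finset.sum_eq_single k]
  · simp
  · intro b _ hb; simp [Ne.symm hb]
  · intro hk
    simp only [Finset.mem_range, not_lt] at hk
    rw [Nat.choose_eq_zero_of_lt (by omega)]
    simp

lemma laguerre_eq_eval (n : ℕ) (x : ℝ) : laguerre n x = (LagP n).eval x := by
  rw [laguerre, LagP]
  rw [Polynomial.eval_finset_sum]
  apply Finset.sum_congr rfl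
  intro j hj
  rw [Finset.mem_range] at hj
  rw [Nat.choose_symm (by omega : j ≤ n)]
  simp only [eval_mul, eval_C, eval_pow, eval_X]
  rw [neg_pow]
  ring

noncomputable def dpoly (P : Polynomial ℝ) : Polynomial ℝ := 2 • derivative P - P

lemma coeff_dpoly (P : Polynomial ℝ) (k : ℕ) :
    (dpoly P).coeff k = 2 * (P.coeff (k+1) * ((k:ℝ)+1)) - P.coeff k := by
  simp [dpoly, coeff_derivative]


lemma lagP_identity (n : ℕ) :
    (2:ℝ) • dpoly (LagP n) + X * dpoly (dpoly (LagP n))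
      = -((((n:ℝ)+1) • LagP (n+1) + (2*(n:ℝ)+1) • LagP n + (n:ℝ) • LagP (n-1))) := by
  ext k
  cases k with
  | zero =>
    simp only [coeff_add, coeff_smul, coeff_neg, mul_coeff_zero, coeff_X_zero, zero_mul,
      coeff_dpoly, coeff_LagP, smul_eq_mul]
    simp [Nat.choose_zero_right, Nat.choose_one_right, Nat.factorial]
    ring
  | succ m =>
    have hkey := keyid n m
    simp only [coeff_add, coeff_smul, coeff_neg, coeff_X_mul, coeff_dpoly, coeff_LagP,
      smul_eq_mul]
    have hf : ((Nat.factorial m : ℝ)) ≠ 0 := by positivity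
    have hm1 : ((Nat.factorial (m+1) : ℝ)) = ((m:ℝ)+1) * (Nat.factorial m : ℝ) := by
      push_cast [Nat.factorial_succ]; ring
    have hm2 : ((Nat.factorial (m+2) : ℝ)) = ((m:ℝ)+2) * (((m:ℝ)+1) * (Nat.factorial m : ℝ)) := by
      push_cast [Nat.factorial_succ]; ring
    push_cast
    rw [hm1, hm2]
    simp only [pow_succ]
    have hM1 : ((m:ℝ)+1) ≠ 0 := by positivity
    have hM2 : ((m:ℝ)+2) ≠ 0 := by positivity
    have hD : ((m:ℝ)+2)*(((m:ℝ)+1)*(Nat.factorial m : ℝ)) ≠ 0 := by positivity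
    have e1 : ∀ x:ℝ, x / (((m:ℝ)+1) * (Nat.factorial m : ℝ)) = (x*((m:ℝ)+2))/(((m:ℝ)+2)*(((m:ℝ)+1)*(Nat.factorial m : ℝ))) := by
      intro x; rw [div_eq_div_iff (by positivity) hD]; ring
    have e2 : ∀ x:ℝ, x / ((Nat.factorial m : ℝ)) = (x*(((m:ℝ)+2)*((m:ℝ)+1)))/(((m:ℝ)+2)*(((m:ℝ)+1)*(Nat.factorial m : ℝ))) := by
      intro x; rw [div_eq_div_iff hf hD]; ring
    rw [e1, e1, e1, e2]
    simp only [div_mul_eq_mul_div, ← mul_div_assoc, ← sub_div, ← add_div, ← neg_div]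
    rw [div_eq_div_iff hD hD]
    linear_combination (((-1:ℝ)^m) * ((m:ℝ)+2) * (((m:ℝ)+2) * (((m:ℝ)+1) * (Nat.factorial m : ℝ)))) * hkey

lemma eval_dpoly (P : Polynomial ℝ) (x : ℝ) :
    eval x (dpoly P) = 2 * eval x (derivative P) - eval x P := by simp [dpoly]

lemma hasDerivAt_base (ε : ℝ) (hε : 0 < ε) (P : Polynomial ℝ) (c t : ℝ) :
    HasDerivAt (fun s : ℝ => Real.exp (-(s^2)/ε) * eval (2/ε*(s^2+c)) P)
      (2/ε*t*(Real.exp (-(t^2)/ε) * eval (2/ε*(t^2+c)) (dpoly P))) t := by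
  have h1 : HasDerivAt (fun s : ℝ => -(s^2)/ε) (-(2*t)/ε) t := by
    simpa using ((hasDerivAt_pow 2 t).neg.div_const ε)
  have h2 : HasDerivAt (fun s : ℝ => 2/ε*(s^2+c)) (2/ε*(2*t)) t := by
    simpa using (((hasDerivAt_pow 2 t).add_const c).const_mul (2/ε))
  have h3 : HasDerivAt (fun s : ℝ => eval (2/ε*(s^2+c)) P)
      (eval (2/ε*(t^2+c)) (derivative P) * (2/ε*(2*t))) t :=
    HasDerivAt.comp t (P.hasDerivAt _) h2
  have h4 := (h1.exp).mul h3
  have he : Real.exp (-(t^2)/ε) * (-(2*t)/ε) * eval (2/ε*(t^2+c)) P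
      + Real.exp (-(t^2)/ε) * (eval (2/ε*(t^2+c)) (derivative P) * (2/ε*(2*t)))
      = 2/ε*t*(Real.exp (-(t^2)/ε) * eval (2/ε*(t^2+c)) (dpoly P)) := by
    rw [eval_dpoly]; ring
  exact he ▸ h4

lemma hasDerivAt_base2 (ε : ℝ) (hε : 0 < ε) (P : Polynomial ℝ) (c t : ℝ) :
    HasDerivAt (fun s : ℝ => 2/ε*s*(Real.exp (-(s^2)/ε) * eval (2/ε*(s^2+c)) (dpoly P)))
      (2/ε*(Real.exp (-(t^2)/ε) * (eval (2/ε*(t^2+c)) (dpoly P)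
        + (2*t^2/ε) * eval (2/ε*(t^2+c)) (dpoly (dpoly P))))) t := by
  have h0 : HasDerivAt (fun s : ℝ => 2/ε*s) (2/ε) t := by
    simpa using (hasDerivAt_id t).const_mul (2/ε)
  have h1 := hasDerivAt_base ε hε (dpoly P) c t
  have h4 := h0.mul h1
  have he : 2/ε * (Real.exp (-(t^2)/ε) * eval (2/ε*(t^2+c)) (dpoly P))
      + 2/ε*t * (2/ε*t*(Real.exp (-(t^2)/ε) * eval (2/ε*(t^2+c)) (dpoly (dpoly P))))
      = 2/ε*(Real.exp (-(t^2)/ε) * (eval (2/ε*(t^2+c)) (dpoly P)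
        + (2*t^2/ε) * eval (2/ε*(t^2+c)) (dpoly (dpoly P)))) := by
    field_simp
  exact he ▸ h4

lemma iteratedDeriv_two {f f' f'' : ℝ → ℝ} (h1 : ∀ t, HasDerivAt f (f' t) t)
    (h2 : ∀ t, HasDerivAt f' (f'' t) t) (x : ℝ) : iteratedDeriv 2 f x = f'' x := by
  have e1 : deriv f = f' := funext fun t => (h1 t).deriv
  rw [iteratedDeriv_succ, iteratedDeriv_one, e1]
  exact (h2 x).deriv

noncomputable def coef (e N n : ℕ) : ℝ := (N.factorial : ℝ) * ((N+e).choose (n+e) : ℝ)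

lemma coef_rec (e N n : ℕ) :
    (n:ℝ) * coef e N (n-1) + (2*(n:ℝ)+(e:ℝ)+1) * coef e N n + ((n:ℝ)+(e:ℝ)+1) * coef e N (n+1)
      = coef e (N+1) n := by
  cases n with
  | zero =>
    simp only [coef, Nat.cast_zero, Nat.zero_sub, Nat.factorial_succ, Nat.zero_add, zero_add]
    rw [show N+1+e = N+e+1 from by omega, show 1+e = e+1 from by omega]
    have h1 := chooseR1 (N+e+1) e
    have h3 := choosePascal (N+e) e
    push_cast at h1 h3 ⊢
    linear_combination ((N.factorial : ℝ)) * h1 - ((N.factorial : ℝ)) * ((e:ℝ)+1) * h3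
  | succ p =>
    simp only [coef, Nat.add_sub_cancel, Nat.factorial_succ]
    rw [show N+1+e = N+e+1 from by omega, show p+1+e = p+e+1 from by omega,
      show p+1+1+e = p+e+1+1 from by omega]
    have h1 := chooseR1 (N+e) (p+e)
    have h2 := chooseR1 (N+e) (p+e+1)
    have h3 := choosePascal (N+e) (p+e)
    push_cast at h1 h2 h3 ⊢
    linear_combination ((N.factorial : ℝ)) * h1 + ((N.factorial : ℝ)) * h2
      - ((N:ℝ)+1) * ((N.factorial : ℝ)) * h3

lemma coef_eq_zero (e N n : ℕ) (h : N < n) : coef e N n = 0 := by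
  rw [coef, Nat.choose_eq_zero_of_lt (by omega)]
  simp

def box (e N : ℕ) : Finset (Fin (e+1) → ℕ) := Fintype.piFinset (fun _ => Finset.range (N+1))

lemma mem_box {e N : ℕ} {k : Fin (e+1) → ℕ} : k ∈ box e N ↔ ∀ j, k j ≤ N := by
  unfold IterLag.box
  simp [Fintype.mem_piFinset, Nat.lt_succ_iff]

lemma shift (e N : ℕ) (i : Fin (e+1)) (h : (Fin (e+1) → ℕ) → ℝ)
    (h0 : ∀ k, k i = 0 → h k = 0) (htop : ∀ k, k i = N+2 → h k = 0) :
    ∑ k ∈ box e (N+1), h (Function.update k i (k i + 1)) = ∑ k ∈ box e (N+1), h k := by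
  classical
  rw [← Finset.sum_filter_add_sum_filter_not (box e (N+1)) (fun k => k i ≤ N)
    (fun k => h (Function.update k i (k i + 1)))]
  rw [← Finset.sum_filter_add_sum_filter_not (box e (N+1)) (fun k => 1 ≤ k i) h]
  have e2 : ∑ k ∈ (box e (N+1)).filter (fun k => ¬ k i ≤ N), h (Function.update k i (k i + 1)) = 0 := by
    apply Finset.sum_eq_zero
    intro k hk
    simp only [Finset.mem_filter, mem_box] at hk
    have h1 := hk.1 i
    have h2 := hk.2
    apply htop
    simp only [Function.update_self]
    omega
  have e3 : ∑ k ∈ (box e (N+1)).filter (fun k => ¬ 1 ≤ k i), h k = 0 := by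
    apply Finset.sum_eq_zero
    intro k hk
    simp only [Finset.mem_filter, mem_box] at hk
    exact h0 _ (by have := hk.2; omega)
  rw [e2, e3, add_zero, add_zero]
  apply Finset.sum_nbij' (fun k => Function.update k i (k i + 1))
    (fun k => Function.update k i (k i - 1))
  · intro k hk
    simp only [Finset.mem_filter, mem_box] at hk ⊢
    refine ⟨fun j => ?_, by simp [Function.update_self]⟩
    rcases eq_or_ne j i with rfl | hj
    · simp only [Function.update_self]
      have := hk.2
      omega
    · simp only [Function.update_of_ne hj]; exact hk.1 j
  · intro k hk
    simp only [Finset.mem_filter, mem_box] at hk ⊢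
    have h1 := hk.1 i
    refine ⟨fun j => ?_, ?_⟩
    · rcases eq_or_ne j i with rfl | hj
      · simp only [Function.update_self]
        omega
      · simp only [Function.update_of_ne hj]; exact hk.1 j
    · simp only [Function.update_self]
      have := hk.2
      omega
  · intro k hk
    simp only [Finset.mem_filter, mem_box] at hk
    simp [Function.update_idem, Function.update_self]
  · intro k hk
    simp only [Finset.mem_filter, mem_box] at hk
    rw [Function.update_idem, Function.update_self]
    rw [show k i - 1 + 1 = k i from by have := hk.2; omega, Function.update_eq_self]
  · intro k hk
    rfl

lemma sum_update_add (e : ℕ) (k : Fin (e+1) → ℕ) (i : Fin (e+1)) :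
    ∑ j, (Function.update k i (k i + 1)) j = (∑ j, k j) + 1 := by
  classical
  rw [Finset.sum_update_of_mem (Finset.mem_univ i)]
  rw [Finset.sdiff_singleton_eq_erase, ← Finset.add_sum_erase _ k (Finset.mem_univ i)]
  ring

lemma down_up_eq (e : ℕ) (k : Fin (e+1) → ℕ) (i : Fin (e+1)) :
    (fun m => Function.update m i (m i - 1)) (Function.update k i (k i + 1)) = k := by
  simp only [Function.update_idem, Function.update_self]
  rw [show k i + 1 - 1 = k i from rfl, Function.update_eq_self]

lemma single_le_sum' (e : ℕ) (k : Fin (e+1) → ℕ) (j : Fin (e+1)) : k j ≤ ∑ i, k i :=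
  Finset.single_le_sum (fun _ _ => Nat.zero_le _) (Finset.mem_univ j)

lemma comb (e N : ℕ) (F : (Fin (e+1) → ℕ) → ℝ) :
    ∑ k ∈ box e N, ∑ i, coef e N (∑ j, k j) *
      (((k i : ℝ)+1) * F (Function.update k i (k i + 1))
        + (2*(k i : ℝ)+1) * F k
        + (k i : ℝ) * F (Function.update k i (k i - 1)))
    = ∑ k ∈ box e (N+1), coef e (N+1) (∑ j, k j) * F k := by
  classical
  -- extend box
  rw [show (box e N : Finset (Fin (e+1) → ℕ)) = box e N from rfl]
  have hsub : box e N ⊆ box e (N+1) := by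
    intro k hk; rw [mem_box] at hk ⊢; exact fun j => le_trans (hk j) (Nat.le_succ N)
  rw [Finset.sum_subset hsub (by
    intro k hk hk'
    rw [mem_box] at hk
    have : ¬ ∀ j, k j ≤ N := fun hc => hk' (mem_box.mpr hc)
    push_neg at this
    obtain ⟨j, hj⟩ := this
    have hsum : N < ∑ j, k j := lt_of_lt_of_le hj (single_le_sum' e k j)
    apply Finset.sum_eq_zero
    intro i _
    rw [coef_eq_zero e N _ hsum, zero_mul])]
  rw [Finset.sum_comm]
  have key : ∀ i : Fin (e+1), ∑ k ∈ box e (N+1), coef e N (∑ j, k j) *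
      (((k i : ℝ)+1) * F (Function.update k i (k i + 1))
        + (2*(k i : ℝ)+1) * F k
        + (k i : ℝ) * F (Function.update k i (k i - 1)))
      = ∑ k ∈ box e (N+1),
          (coef e N ((∑ j, k j) - 1) * (k i : ℝ)
           + coef e N (∑ j, k j) * (2*(k i : ℝ)+1)
           + coef e N ((∑ j, k j) + 1) * ((k i : ℝ)+1)) * F k := by
    intro i
    have hup : ∑ k ∈ box e (N+1), coef e N (∑ j, k j) * (((k i : ℝ)+1) * F (Function.update k i (k i + 1)))
        = ∑ k ∈ box e (N+1), coef e N ((∑ j, k j) - 1) * (k i : ℝ) * F k := by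
      rw [← shift e N i (fun k => coef e N ((∑ j, k j) - 1) * (k i : ℝ) * F k)
        (by intro k hk; rw [hk]; simp)
        (by intro k hk
            rw [coef_eq_zero e N _ (by have := single_le_sum' e k i; omega), zero_mul, zero_mul])]
      apply Finset.sum_congr rfl
      intro k _
      rw [sum_update_add, Function.update_self, Nat.add_sub_cancel]
      push_cast
      ring
    have hdown : ∑ k ∈ box e (N+1), coef e N (∑ j, k j) * ((k i : ℝ) * F (Function.update k i (k i - 1)))
        = ∑ k ∈ box e (N+1), coef e N ((∑ j, k j) + 1) * ((k i : ℝ)+1) * F k := by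
      rw [← shift e N i (fun k => coef e N (∑ j, k j) * ((k i : ℝ) * F (Function.update k i (k i - 1))))
        (by intro k hk; rw [hk]; simp)
        (by intro k hk
            rw [coef_eq_zero e N _ (by have := single_le_sum' e k i; omega), zero_mul])]
      apply Finset.sum_congr rfl
      intro k _
      rw [sum_update_add, Function.update_self]
      simp only [show k i + 1 - 1 = k i from rfl, Function.update_idem, Function.update_eq_self]
      push_cast
      ring
    calc ∑ k ∈ box e (N+1), coef e N (∑ j, k j) *
      (((k i : ℝ)+1) * F (Function.update k i (k i + 1))
        + (2*(k i : ℝ)+1) * F k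
        + (k i : ℝ) * F (Function.update k i (k i - 1)))
        = (∑ k ∈ box e (N+1), coef e N (∑ j, k j) * (((k i : ℝ)+1) * F (Function.update k i (k i + 1))))
          + ((∑ k ∈ box e (N+1), coef e N (∑ j, k j) * ((2*(k i : ℝ)+1) * F k))
          + (∑ k ∈ box e (N+1), coef e N (∑ j, k j) * ((k i : ℝ) * F (Function.update k i (k i - 1))))) := by
          rw [← Finset.sum_add_distrib, ← Finset.sum_add_distrib]
          apply Finset.sum_congr rfl
          intro k _
          ring
      _ = ∑ k ∈ box e (N+1),
          (coef e N ((∑ j, k j) - 1) * (k i : ℝ)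
           + coef e N (∑ j, k j) * (2*(k i : ℝ)+1)
           + coef e N ((∑ j, k j) + 1) * ((k i : ℝ)+1)) * F k := by
          rw [hup, hdown, ← Finset.sum_add_distrib, ← Finset.sum_add_distrib]
          apply Finset.sum_congr rfl
          intro k _
          ring
  calc ∑ i, ∑ k ∈ box e (N+1), coef e N (∑ j, k j) *
      (((k i : ℝ)+1) * F (Function.update k i (k i + 1))
        + (2*(k i : ℝ)+1) * F k
        + (k i : ℝ) * F (Function.update k i (k i - 1)))
      = ∑ i, ∑ k ∈ box e (N+1),
          (coef e N ((∑ j, k j) - 1) * (k i : ℝ)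
           + coef e N (∑ j, k j) * (2*(k i : ℝ)+1)
           + coef e N ((∑ j, k j) + 1) * ((k i : ℝ)+1)) * F k := by
        apply Finset.sum_congr rfl
        intro i _
        exact key i
    _ = ∑ k ∈ box e (N+1), coef e (N+1) (∑ j, k j) * F k := by
        rw [Finset.sum_comm]
        apply Finset.sum_congr rfl
        intro k _
        rw [← Finset.sum_mul, ← coef_rec e N (∑ j, k j)]
        congr 1
        rw [Finset.sum_add_distrib, Finset.sum_add_distrib]
        have c1 : ∑ i, coef e N ((∑ j, k j) - 1) * (k i : ℝ) = ((∑ j, k j : ℕ) : ℝ) * coef e N ((∑ j, k j) - 1) := by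
          rw [← Finset.mul_sum]
          push_cast
          ring
        have c2 : ∑ i : Fin (e+1), coef e N (∑ j, k j) * (2*(k i : ℝ)+1)
            = (2*((∑ j, k j : ℕ) : ℝ)+(e:ℝ)+1) * coef e N (∑ j, k j) := by
          rw [← Finset.mul_sum]
          rw [Finset.sum_add_distrib, ← Finset.mul_sum]
          push_cast
          simp [Finset.sum_const, Finset.card_univ]
          ring
        have c3 : ∑ i : Fin (e+1), coef e N ((∑ j, k j) + 1) * ((k i : ℝ)+1)
            = (((∑ j, k j : ℕ) : ℝ)+(e:ℝ)+1) * coef e N ((∑ j, k j) + 1) := by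
          rw [← Finset.mul_sum]
          rw [Finset.sum_add_distrib]
          push_cast
          simp [Finset.sum_const, Finset.card_univ]
          ring
        rw [c1, c2, c3]

variable {e : ℕ}

def bigF (ε : ℝ) (e : ℕ) (k : Fin (e+1) → ℕ) : PS (e+1) → ℝ := fun z =>
  gaussW0 ε z * ∏ j, laguerre (k j) (2/ε*(z.1 j^2 + z.2 j^2))

def lagprod (ε : ℝ) (e : ℕ) (k : Fin (e+1) → ℕ) (i : Fin (e+1)) (z : PS (e+1)) : ℝ :=
  ∏ j ∈ Finset.univ.erase i, laguerre (k j) (2/ε*(z.1 j^2 + z.2 j^2))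

def Kq (ε : ℝ) (e : ℕ) (k : Fin (e+1) → ℕ) (i : Fin (e+1)) (z : PS (e+1)) : ℝ :=
  ((Real.pi*ε)^(e+1))⁻¹ * Real.exp (-((∑ j ∈ Finset.univ.erase i, (z.1 j^2 + z.2 j^2)) + (z.2 i)^2)/ε)
    * lagprod ε e k i z

def Kp (ε : ℝ) (e : ℕ) (k : Fin (e+1) → ℕ) (i : Fin (e+1)) (z : PS (e+1)) : ℝ :=
  ((Real.pi*ε)^(e+1))⁻¹ * Real.exp (-((∑ j ∈ Finset.univ.erase i, (z.1 j^2 + z.2 j^2)) + (z.1 i)^2)/ε)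
    * lagprod ε e k i z

lemma sum_split (i : Fin (e+1)) (g : Fin (e+1) → ℝ) :
    ∑ j, g j = g i + ∑ j ∈ Finset.univ.erase i, g j :=
  (Finset.add_sum_erase _ g (Finset.mem_univ i)).symm

lemma line_q (ε : ℝ) (k : Fin (e+1) → ℕ) (i : Fin (e+1)) (z : PS (e+1)) (t : ℝ) :
    bigF ε e k (Function.update z.1 i t, z.2)
      = (Kq ε e k i z) * (Real.exp (-(t^2)/ε) * eval (2/ε*(t^2+(z.2 i)^2)) (LagP (k i))) := by
  unfold bigF gaussW0 Kq lagprod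
  have hsum : ∑ j, ((Function.update z.1 i t) j ^2 + z.2 j ^2)
      = (t^2 + (z.2 i)^2) + ∑ j ∈ Finset.univ.erase i, (z.1 j^2 + z.2 j^2) := by
    rw [sum_split i]
    rw [Function.update_self]
    congr 1
    apply Finset.sum_congr rfl
    intro j hj
    rw [Function.update_of_ne (Finset.mem_erase.mp hj).1]
  have hprod : ∏ j, laguerre (k j) (2/ε*((Function.update z.1 i t) j^2 + z.2 j^2))
      = laguerre (k i) (2/ε*(t^2+(z.2 i)^2)) * ∏ j ∈ Finset.univ.erase i, laguerre (k j) (2/ε*(z.1 j^2 + z.2 j^2)) := by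
    rw [← Finset.mul_prod_erase _ _ (Finset.mem_univ i), Function.update_self]
    congr 1
    apply Finset.prod_congr rfl
    intro j hj
    rw [Function.update_of_ne (Finset.mem_erase.mp hj).1]
  simp only
  rw [hsum, hprod, laguerre_eq_eval]
  rw [show -((t^2 + (z.2 i)^2) + ∑ j ∈ Finset.univ.erase i, (z.1 j^2 + z.2 j^2))/ε
      = -(t^2)/ε + (-((∑ j ∈ Finset.univ.erase i, (z.1 j^2 + z.2 j^2)) + (z.2 i)^2)/ε) by ring,
    Real.exp_add]
  ring

lemma line_p (ε : ℝ) (k : Fin (e+1) → ℕ) (i : Fin (e+1)) (z : PS (e+1)) (t : ℝ) :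
    bigF ε e k (z.1, Function.update z.2 i t)
      = (Kp ε e k i z) * (Real.exp (-(t^2)/ε) * eval (2/ε*(t^2+(z.1 i)^2)) (LagP (k i))) := by
  unfold bigF gaussW0 Kp lagprod
  have hsum : ∑ j, (z.1 j ^2 + (Function.update z.2 i t) j ^2)
      = ((z.1 i)^2 + t^2) + ∑ j ∈ Finset.univ.erase i, (z.1 j^2 + z.2 j^2) := by
    rw [sum_split i]
    rw [Function.update_self]
    congr 1
    apply Finset.sum_congr rfl
    intro j hj
    rw [Function.update_of_ne (Finset.mem_erase.mp hj).1]
  have hprod : ∏ j, laguerre (k j) (2/ε*(z.1 j^2 + (Function.update z.2 i t) j^2))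
      = laguerre (k i) (2/ε*((z.1 i)^2 + t^2)) * ∏ j ∈ Finset.univ.erase i, laguerre (k j) (2/ε*(z.1 j^2 + z.2 j^2)) := by
    rw [← Finset.mul_prod_erase _ _ (Finset.mem_univ i), Function.update_self]
    congr 1
    apply Finset.prod_congr rfl
    intro j hj
    rw [Function.update_of_ne (Finset.mem_erase.mp hj).1]
  simp only
  rw [hsum, hprod, laguerre_eq_eval]
  rw [show ((z.1 i)^2 + t^2) = (t^2 + (z.1 i)^2) by ring]
  rw [show -((t^2 + (z.1 i)^2) + ∑ j ∈ Finset.univ.erase i, (z.1 j^2 + z.2 j^2))/ε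
      = -(t^2)/ε + (-((∑ j ∈ Finset.univ.erase i, (z.1 j^2 + z.2 j^2)) + (z.1 i)^2)/ε) by ring,
    Real.exp_add]
  ring

lemma Kq_exp (ε : ℝ) (k : Fin (e+1) → ℕ) (i : Fin (e+1)) (z : PS (e+1)) :
    Kq ε e k i z * Real.exp (-((z.1 i)^2)/ε) = gaussW0 ε z * lagprod ε e k i z := by
  unfold Kq gaussW0
  rw [sum_split i (fun j => z.1 j^2 + z.2 j^2)]
  rw [show -((z.1 i^2 + z.2 i^2) + ∑ j ∈ Finset.univ.erase i, (z.1 j^2 + z.2 j^2))/ε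
      = (-((∑ j ∈ Finset.univ.erase i, (z.1 j^2 + z.2 j^2)) + (z.2 i)^2)/ε) + -((z.1 i)^2)/ε by ring,
    Real.exp_add]
  ring

lemma Kp_exp (ε : ℝ) (k : Fin (e+1) → ℕ) (i : Fin (e+1)) (z : PS (e+1)) :
    Kp ε e k i z * Real.exp (-((z.2 i)^2)/ε) = gaussW0 ε z * lagprod ε e k i z := by
  unfold Kp gaussW0
  rw [sum_split i (fun j => z.1 j^2 + z.2 j^2)]
  rw [show -((z.1 i^2 + z.2 i^2) + ∑ j ∈ Finset.univ.erase i, (z.1 j^2 + z.2 j^2))/ε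
      = (-((∑ j ∈ Finset.univ.erase i, (z.1 j^2 + z.2 j^2)) + (z.1 i)^2)/ε) + -((z.2 i)^2)/ε by ring,
    Real.exp_add]
  ring

lemma E_lag (ε : ℝ) (k : Fin (e+1) → ℕ) (i : Fin (e+1)) (z : PS (e+1)) (m : ℕ) :
    gaussW0 ε z * lagprod ε e k i z * laguerre m (2/ε*((z.1 i)^2 + (z.2 i)^2))
      = bigF ε e (Function.update k i m) z := by
  unfold bigF lagprod
  rw [← Finset.mul_prod_erase _ _ (Finset.mem_univ i), Function.update_self]
  have : ∏ j ∈ Finset.univ.erase i, laguerre ((Function.update k i m) j) (2/ε*(z.1 j^2 + z.2 j^2))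
      = ∏ j ∈ Finset.univ.erase i, laguerre (k j) (2/ε*(z.1 j^2 + z.2 j^2)) := by
    apply Finset.prod_congr rfl
    intro j hj
    rw [Function.update_of_ne (Finset.mem_erase.mp hj).1]
  rw [this]
  ring


lemma lap_formula (ε : ℝ) (hε : 0 < ε) (e : ℕ) (S : Finset (Fin (e+1) → ℕ))
    (c : (Fin (e+1) → ℕ) → ℝ) (z : PS (e+1)) :
    -(ε/2) * phaseLap (fun w => ∑ k ∈ S, c k * bigF ε e k w) z
      = ∑ k ∈ S, ∑ i, c k * (((k i : ℝ)+1) * bigF ε e (Function.update k i (k i + 1)) z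
          + (2*(k i : ℝ)+1) * bigF ε e k z
          + (k i : ℝ) * bigF ε e (Function.update k i (k i - 1)) z) := by
  unfold phaseLap
  have hq : ∀ i : Fin (e+1), iteratedDeriv 2
      (fun t => ∑ k ∈ S, c k * bigF ε e k (Function.update z.1 i t, z.2)) (z.1 i)
      = ∑ k ∈ S, (c k * Kq ε e k i z) *
          (2/ε*(Real.exp (-((z.1 i)^2)/ε) * (eval (2/ε*((z.1 i)^2+(z.2 i)^2)) (dpoly (LagP (k i)))
            + (2*(z.1 i)^2/ε) * eval (2/ε*((z.1 i)^2+(z.2 i)^2)) (dpoly (dpoly (LagP (k i))))))) := by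
    intro i
    have hfn : (fun t => ∑ k ∈ S, c k * bigF ε e k (Function.update z.1 i t, z.2))
        = fun t => ∑ k ∈ S, (c k * Kq ε e k i z) *
            (Real.exp (-(t^2)/ε) * eval (2/ε*(t^2+(z.2 i)^2)) (LagP (k i))) := by
      funext t
      apply Finset.sum_congr rfl
      intro k _
      rw [line_q, mul_assoc]
    rw [hfn]
    exact iteratedDeriv_two
      (f' := fun t => ∑ k ∈ S, (c k * Kq ε e k i z) *
        (2/ε*t*(Real.exp (-(t^2)/ε) * eval (2/ε*(t^2+(z.2 i)^2)) (dpoly (LagP (k i))))))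
      (fun t => HasDerivAt.fun_sum (fun k _ => (hasDerivAt_base ε hε (LagP (k i)) ((z.2 i)^2) t).const_mul _))
      (fun t => HasDerivAt.fun_sum (fun k _ => (hasDerivAt_base2 ε hε (LagP (k i)) ((z.2 i)^2) t).const_mul _))
      (z.1 i)
  have hp : ∀ i : Fin (e+1), iteratedDeriv 2
      (fun t => ∑ k ∈ S, c k * bigF ε e k (z.1, Function.update z.2 i t)) (z.2 i)
      = ∑ k ∈ S, (c k * Kp ε e k i z) *
          (2/ε*(Real.exp (-((z.2 i)^2)/ε) * (eval (2/ε*((z.2 i)^2+(z.1 i)^2)) (dpoly (LagP (k i)))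
            + (2*(z.2 i)^2/ε) * eval (2/ε*((z.2 i)^2+(z.1 i)^2)) (dpoly (dpoly (LagP (k i))))))) := by
    intro i
    have hfn : (fun t => ∑ k ∈ S, c k * bigF ε e k (z.1, Function.update z.2 i t))
        = fun t => ∑ k ∈ S, (c k * Kp ε e k i z) *
            (Real.exp (-(t^2)/ε) * eval (2/ε*(t^2+(z.1 i)^2)) (LagP (k i))) := by
      funext t
      apply Finset.sum_congr rfl
      intro k _
      rw [line_p, mul_assoc]
    rw [hfn]
    exact iteratedDeriv_two
      (f' := fun t => ∑ k ∈ S, (c k * Kp ε e k i z) *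
        (2/ε*t*(Real.exp (-(t^2)/ε) * eval (2/ε*(t^2+(z.1 i)^2)) (dpoly (LagP (k i))))))
      (fun t => HasDerivAt.fun_sum (fun k _ => (hasDerivAt_base ε hε (LagP (k i)) ((z.1 i)^2) t).const_mul _))
      (fun t => HasDerivAt.fun_sum (fun k _ => (hasDerivAt_base2 ε hε (LagP (k i)) ((z.1 i)^2) t).const_mul _))
      (z.2 i)
  simp only [hq, hp]
  rw [← Finset.sum_add_distrib, Finset.mul_sum]
  conv_rhs => rw [Finset.sum_comm]
  apply Finset.sum_congr rfl
  intro i _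
  rw [← Finset.sum_add_distrib, Finset.mul_sum]
  apply Finset.sum_congr rfl
  intro k _
  have hne : ε ≠ 0 := ne_of_gt hε
  rw [show 2/ε*(z.2 i^2 + z.1 i^2) = 2/ε*(z.1 i^2 + z.2 i^2) by ring]
  have hcol : ∀ K W : ℝ, -(ε/2) * (K * (2/ε * W)) = -(K*W) := by
    intro K W; field_simp
  rw [mul_add, hcol, hcol]
  have hKq := Kq_exp ε k i z
  have hKp := Kp_exp ε k i z
  have hE1 := E_lag ε k i z (k i + 1)
  have hE2 := E_lag ε k i z (k i)
  rw [Function.update_eq_self] at hE2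
  have hE3 := E_lag ε k i z (k i - 1)
  have hpoly := congrArg (eval (2/ε*(z.1 i^2+z.2 i^2))) (lagP_identity (k i))
  simp only [eval_add, eval_smul, eval_mul, eval_X, eval_neg, smul_eq_mul] at hpoly
  rw [← laguerre_eq_eval, ← laguerre_eq_eval, ← laguerre_eq_eval] at hpoly
  linear_combination
    (-(eval (2/ε*(z.1 i^2+z.2 i^2)) (dpoly (LagP (k i)))
       + (2*(z.1 i)^2/ε) * eval (2/ε*(z.1 i^2+z.2 i^2)) (dpoly (dpoly (LagP (k i))))) * (c k)) * hKq
    + (-(eval (2/ε*(z.1 i^2+z.2 i^2)) (dpoly (LagP (k i)))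
       + (2*(z.2 i)^2/ε) * eval (2/ε*(z.1 i^2+z.2 i^2)) (dpoly (dpoly (LagP (k i))))) * (c k)) * hKp
    + (-(c k) * (gaussW0 ε z * lagprod ε e k i z)) * hpoly
    + ((c k)*((k i:ℝ)+1)) * hE1 + ((c k)*(2*(k i:ℝ)+1)) * hE2 + ((c k)*(k i:ℝ)) * hE3

lemma laguerre_zero (x : ℝ) : laguerre 0 x = 1 := by
  simp [laguerre]

lemma main_induction (ε : ℝ) (hε : 0 < ε) (e N : ℕ) :
    ((fun f : PS (e+1) → ℝ => fun w => (-(ε / 2)) * phaseLap f w)^[N] (gaussW0 ε))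
      = fun z => ∑ k ∈ box e N, coef e N (∑ j, k j) * bigF ε e k z := by
  induction N with
  | zero =>
    simp only [Function.iterate_zero, id_eq]
    funext z
    have hbox : box e 0 = {fun _ => 0} := by
      ext k
      simp [mem_box, Finset.mem_singleton, funext_iff]
    rw [hbox, Finset.sum_singleton]
    simp only [Finset.sum_const_zero, coef, Nat.choose_self, Nat.factorial_zero, bigF,
      laguerre_zero, Finset.prod_const_one]
    norm_num
  | succ N ih =>
    rw [Function.iterate_succ_apply', ih]
    funext z
    show -(ε/2) * phaseLap (fun w => ∑ k ∈ box e N, coef e N (∑ j, k j) * bigF ε e k w) z = _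
    rw [lap_formula ε hε e _ _ z]
    exact comb e N (fun k => bigF ε e k z)

lemma box_to_adT (e N : ℕ) (G : (Fin (e+1) → ℕ) → ℝ) :
    ∑ k ∈ box e N, coef e N (∑ j, k j) * G k
      = (N.factorial : ℝ) * ∑ n ∈ Finset.range (N+1), ((N+e).choose (n+e) : ℝ) *
          ∑ k ∈ Finset.Nat.antidiagonalTuple (e+1) n, G k := by
  classical
  have hU : (Finset.range (N+1)).biUnion (fun n => Finset.Nat.antidiagonalTuple (e+1) n) ⊆ box e N := by
    intro k hk
    rw [Finset.mem_biUnion] at hk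
    obtain ⟨n, hn, hkn⟩ := hk
    rw [Finset.Nat.mem_antidiagonalTuple] at hkn
    rw [Finset.mem_range] at hn
    rw [mem_box]
    intro j
    have := Finset.single_le_sum (f := k) (fun _ _ => Nat.zero_le _) (Finset.mem_univ j)
    omega
  rw [← Finset.sum_subset hU (by
    intro k hk hk'
    have hsum : N < ∑ j, k j := by
      by_contra hc
      push_neg at hc
      exact hk' (Finset.mem_biUnion.mpr ⟨∑ j, k j, Finset.mem_range.mpr (by omega),
        Finset.Nat.mem_antidiagonalTuple.mpr rfl⟩)
    rw [coef, Nat.choose_eq_zero_of_lt (by omega)]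
    simp)]
  rw [Finset.sum_biUnion (by
    intro a ha b hb hab
    simp only [Finset.disjoint_left]
    intro k hka hkb
    rw [Finset.Nat.mem_antidiagonalTuple] at hka hkb
    exact hab (hka ▸ hkb))]
  rw [Finset.mul_sum]
  apply Finset.sum_congr rfl
  intro n hn
  rw [Finset.mul_sum, Finset.mul_sum]
  apply Finset.sum_congr rfl
  intro k hk
  rw [Finset.Nat.mem_antidiagonalTuple] at hk
  rw [hk, coef]
  ring

end IterLag

theorem iterated_laplacian_gaussian_multidim
    (ε : ℝ) (hε : 0 < ε) (d : ℕ) (hd : 1 ≤ d) (N : ℕ) (z : PS d) :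
    ((fun f : PS d → ℝ => fun w => (-(ε / 2)) * phaseLap f w)^[N] (gaussW0 ε)) z =
      (Nat.factorial N : ℝ) * gaussW0 ε z *
        ∑ n ∈ Finset.range (N + 1), ((N + d - 1).choose (n + d - 1) : ℝ) *
          ∑ k ∈ Finset.Nat.antidiagonalTuple d n,
            ∏ j, laguerre (k j) (2 / ε * (z.1 j ^ 2 + z.2 j ^ 2)) := by
  obtain ⟨e, rfl⟩ : ∃ e, d = e + 1 := ⟨d - 1, by omega⟩
  rw [IterLag.main_induction ε hε e N]
  simp only [show ∀ m : ℕ, m + (e+1) - 1 = m + e from fun m => by omega]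
  show ∑ k ∈ IterLag.box e N, IterLag.coef e N (∑ j, k j) *
      (gaussW0 ε z * ∏ j, laguerre (k j) (2 / ε * (z.1 j ^ 2 + z.2 j ^ 2))) = _
  rw [IterLag.box_to_adT e N (fun k => gaussW0 ε z * ∏ j, laguerre (k j) (2 / ε * (z.1 j ^ 2 + z.2 j ^ 2)))]
  have hX : ∑ n ∈ Finset.range (N+1), ((N+e).choose (n+e) : ℝ) *
        ∑ k ∈ Finset.Nat.antidiagonalTuple (e+1) n,
          (gaussW0 ε z * ∏ j, laguerre (k j) (2 / ε * (z.1 j ^ 2 + z.2 j ^ 2)))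
      = gaussW0 ε z * ∑ n ∈ Finset.range (N+1), ((N+e).choose (n+e) : ℝ) *
        ∑ k ∈ Finset.Nat.antidiagonalTuple (e+1) n,
          ∏ j, laguerre (k j) (2 / ε * (z.1 j ^ 2 + z.2 j ^ 2)) := by
    rw [Finset.mul_sum]
    apply Finset.sum_congr rfl
    intro n _
    rw [← Finset.mul_sum]
    ring
  rw [hX]
  ring
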